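/- Let a_n denote the number of decorated Dyck paths of length 2n having no peak at level 1. Then the formal power series Y(x) = \sum_{n\ge 0} a_n x^n (with integer coefficients) satisfies the algebraic equation x(3+x)\,Y(x)^2 - 2(1-x^2)\,Y(x) + (x-1)(x-2) = 0 in the ring of formal power series over the integers. -/

import Mathlib

/-- A step of a decorated path: up, black down, or red down. -/
inductive Step : Type
  | U : Step
  | D : Step
  | R : Step
  deriving DecidableEq

/-- The height change of a step. -/
def stepVal : Step → ℤ
  | Step.U => 1
  | Step.D => -1
  | Step.R => -1

/-- The final height of a word of steps. -/
def height (w : List Step) : ℤ := (w.map stepVal).sum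

/-- A decorated path: all prefixes have nonnegative height, `U` is never
immediately followed by `R`, and `R` is never immediately followed by `U`. -/
def IsDecoratedPath (w : List Step) : Prop :=
  (∀ p : List Step, p <+: w → 0 ≤ height p) ∧
    ¬ [Step.U, Step.R] <:+: w ∧ ¬ [Step.R, Step.U] <:+: w

/-- A decorated Dyck path: a decorated path with final height 0. -/
def IsDecoratedDyck (w : List Step) : Prop :=
  IsDecoratedPath w ∧ height w = 0

/-- The path has a peak at level 1: some `U` taken from height 0 is immediately
followed by a down-step (`D` or `R`). -/
def HasPeakAtLevelOne (w : List Step) : Prop :=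
  ∃ p q : List Step, ∃ d : Step, (d = Step.D ∨ d = Step.R) ∧
    w = p ++ Step.U :: d :: q ∧ height p = 0

/-- The number of decorated Dyck paths of length `2 * n` having no peak at level 1. -/
noncomputable def a (n : ℕ) : ℕ :=
  Nat.card {w : List Step // w.length = 2 * n ∧ IsDecoratedDyck w ∧ ¬ HasPeakAtLevelOne w}

/-! ### Auxiliary development -/

open List

@[simp] lemma stepVal_U : stepVal Step.U = 1 := rfl
@[simp] lemma stepVal_D : stepVal Step.D = -1 := rfl
@[simp] lemma stepVal_R : stepVal Step.R = -1 := rfl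

@[simp] lemma height_nil : height [] = 0 := rfl

@[simp] lemma height_cons (s : Step) (w : List Step) :
    height (s :: w) = stepVal s + height w := by simp [height]

@[simp] lemma height_append (v w : List Step) :
    height (v ++ w) = height v + height w := by simp [height]

lemma stepVal_cases (s : Step) : s = Step.U ∨ stepVal s = -1 := by
  cases s <;> simp

lemma down_iff (d : Step) : stepVal d = -1 ↔ (d = Step.D ∨ d = Step.R) := by
  cases d <;> simp

/-- A good adjacent pair. -/
def Good (x y : Step) : Prop :=
  ¬(x = Step.U ∧ y = Step.R) ∧ ¬(x = Step.R ∧ y = Step.U)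

lemma good_of_down_down {x y : Step} (hx : stepVal x = -1) (hy : stepVal y = -1) :
    Good x y := by
  cases x <;> cases y <;> simp_all <;> simp [Good]

lemma pair_infix_iff {x y : Step} {w : List Step} :
    [x, y] <:+: w ↔ ∃ s t, w = s ++ x :: y :: t := by
  constructor
  · rintro ⟨s, t, rfl⟩; exact ⟨s, t, by simp⟩
  · rintro ⟨s, t, rfl⟩; exact ⟨s, t, by simp⟩

lemma chain'_good_of_not_infix :
    ∀ (w : List Step), ¬ [Step.U, Step.R] <:+: w → ¬ [Step.R, Step.U] <:+: w →
      Chain' Good w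
  | [], _, _ => List.isChain_nil
  | [_], _, _ => List.isChain_singleton _
  | (a :: b :: t), h1, h2 => by
    show List.IsChain Good (a :: b :: t)
    rw [List.isChain_cons_cons]
    refine ⟨⟨?_, ?_⟩, chain'_good_of_not_infix (b :: t) ?_ ?_⟩
    · rintro ⟨rfl, rfl⟩; exact h1 ⟨[], t, rfl⟩
    · rintro ⟨rfl, rfl⟩; exact h2 ⟨[], t, rfl⟩
    · intro hh
      rcases pair_infix_iff.mp hh with ⟨s, u, hsu⟩
      exact h1 (pair_infix_iff.mpr ⟨a :: s, u, by rw [hsu]; rfl⟩)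
    · intro hh
      rcases pair_infix_iff.mp hh with ⟨s, u, hsu⟩
      exact h2 (pair_infix_iff.mpr ⟨a :: s, u, by rw [hsu]; rfl⟩)

lemma not_infix_of_chain'_good {w : List Step} (h : Chain' Good w) :
    ¬ [Step.U, Step.R] <:+: w ∧ ¬ [Step.R, Step.U] <:+: w := by
  constructor
  · intro hh
    rcases pair_infix_iff.mp hh with ⟨s, t, rfl⟩
    have h2 : Chain' Good (Step.U :: Step.R :: t) :=
      (List.isChain_append.mp h).2.1
    exact (List.isChain_cons_cons.mp h2).1.1 ⟨rfl, rfl⟩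
  · intro hh
    rcases pair_infix_iff.mp hh with ⟨s, t, rfl⟩
    have h2 : Chain' Good (Step.R :: Step.U :: t) :=
      (List.isChain_append.mp h).2.1
    exact (List.isChain_cons_cons.mp h2).1.2 ⟨rfl, rfl⟩

lemma head_eq_U {x : Step} {xs : List Step}
    (h : ∀ p, p <+: x :: xs → 0 ≤ height p) : x = Step.U := by
  have h1 := h [x] ⟨xs, rfl⟩
  rcases stepVal_cases x with hx | hx
  · exact hx
  · simp [hx] at h1

lemma dyck_head_U {p : List Step} (h : IsDecoratedDyck p) :
    ∀ x xs, p = x :: xs → x = Step.U := by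
  rintro x xs rfl; exact head_eq_U h.1.1

lemma dyck_head?_U {p : List Step} (h : IsDecoratedDyck p) :
    ∀ y ∈ p.head?, y = Step.U := by
  intro y hy
  cases p with
  | nil => simp at hy
  | cons x xs => simp at hy; subst hy; exact dyck_head_U h _ _ rfl

lemma concat_last {l : List Step} {x : Step} (h : IsDecoratedDyck (l ++ [x])) :
    stepVal x = -1 := by
  have h0 : 0 ≤ height l := h.1.1 l ⟨[x], rfl⟩
  have h1 : height l + stepVal x = 0 := by
    have h2 := h.2; simp at h2; linarith
  rcases stepVal_cases x with rfl | hx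
  · exfalso; rw [stepVal_U] at h1; linarith
  · exact hx

lemma prefix_append_cases {α : Type*} {r l m : List α} (h : r <+: l ++ m) :
    r <+: l ∨ ∃ r', r = l ++ r' ∧ r' <+: m := by
  obtain ⟨t, ht⟩ := h
  rcases List.append_eq_append_iff.mp ht with ⟨a', h1, h2⟩ | ⟨c', h1, h2⟩
  · exact Or.inl ⟨a', h1.symm⟩
  · exact Or.inr ⟨c', h1, ⟨t, h2.symm⟩⟩

lemma dyck_nil : IsDecoratedDyck ([] : List Step) := by
  refine ⟨⟨?_, ?_, ?_⟩, rfl⟩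
  · intro p hp; rw [List.prefix_nil.mp hp]; simp
  · rintro ⟨s, t, h⟩; simp at h
  · rintro ⟨s, t, h⟩; simp at h

/-- Composition: gluing two decorated Dyck paths. -/
lemma glue_isDyck {p q : List Step} {d : Step} (hp : IsDecoratedDyck p)
    (hq : IsDecoratedDyck q) (hd : stepVal d = -1) (h1 : p = [] → d = Step.D)
    (h2 : d = Step.R → q = []) :
    IsDecoratedDyck (Step.U :: p ++ d :: q) := by
  have cp : Chain' Good p := chain'_good_of_not_infix p hp.1.2.1 hp.1.2.2
  have cq : Chain' Good q := chain'_good_of_not_infix q hq.1.2.1 hq.1.2.2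
  have cw : Chain' Good (Step.U :: p ++ d :: q) := by
    show List.IsChain Good (Step.U :: p ++ d :: q)
    rw [List.isChain_append]
    refine ⟨?_, ?_, ?_⟩
    · rw [show Step.U :: p = [Step.U] ++ p from rfl, List.isChain_append]
      refine ⟨List.isChain_singleton _, cp, ?_⟩
      intro x hx y hy
      simp at hx; subst hx
      have hyU := dyck_head?_U hp y hy; subst hyU
      simp [Good]
    · rw [show d :: q = [d] ++ q from rfl, List.isChain_append]
      refine ⟨List.isChain_singleton _, cq, ?_⟩
      intro x hx y hy
      simp at hx; subst hx
      have hyU := dyck_head?_U hq y hy; subst hyU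
      have hq_ne : q ≠ [] := by
        intro hqe; rw [hqe] at hy; simp at hy
      have hdD : d = Step.D := by
        rcases (down_iff d).mp hd with rfl | rfl
        · rfl
        · exact absurd (h2 rfl) hq_ne
      subst hdD
      simp [Good]
    · intro x hx y hy
      simp at hy; subst hy
      rcases p.eq_nil_or_concat' with rfl | ⟨l, z, rfl⟩
      · simp at hx; subst hx
        rw [h1 rfl]
        simp [Good]
      · rw [show Step.U :: (l ++ [z]) = (Step.U :: l) ++ [z] from rfl,
          List.getLast?_concat] at hx
        simp at hx; subst hx
        exact good_of_down_down (concat_last hp) hd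
  have hpre : ∀ r, r <+: Step.U :: p ++ d :: q → 0 ≤ height r := by
    intro r hr
    rw [List.cons_append] at hr
    rcases r with _ | ⟨s, r'⟩
    · simp
    · rw [List.cons_prefix_cons] at hr
      obtain ⟨rfl, hr'⟩ := hr
      rcases prefix_append_cases hr' with hrp | ⟨r'', rfl, hr''⟩
      · have := hp.1.1 _ hrp
        simp; linarith
      · rcases r'' with _ | ⟨e, r'''⟩
        · simp [hp.2]
        · rw [List.cons_prefix_cons] at hr''
          obtain ⟨rfl, hr'''⟩ := hr''
          have := hq.1.1 _ hr'''
          simp [hp.2, hd]; linarith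
  have hnb := not_infix_of_chain'_good cw
  refine ⟨⟨hpre, hnb.1, hnb.2⟩, ?_⟩
  simp [hp.2, hq.2, hd]

lemma hit_zero :
    ∀ (t : List Step) (h0 : ℤ), 0 < h0 → h0 + height t ≤ 0 →
      ∃ p d q, t = p ++ d :: q ∧ (∀ p', p' <+: p → 0 < h0 + height p') ∧
        h0 + height p + stepVal d = 0
  | [], h0, hpos, hle => by simp at hle; omega
  | (s :: t'), h0, hpos, hle => by
    by_cases hc : h0 + stepVal s ≤ 0
    · have hs : stepVal s = -1 := by
        rcases stepVal_cases s with rfl | hv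
        · rw [stepVal_U] at hc; omega
        · exact hv
      have h01 : h0 = 1 := by rw [hs] at hc; omega
      refine ⟨[], s, t', rfl, ?_, by simp [hs, h01]⟩
      intro p' hp'
      rw [List.prefix_nil.mp hp']; simpa using hpos
    · push_neg at hc
      obtain ⟨p, d, q, rfl, hpref, hsum⟩ :=
        hit_zero t' (h0 + stepVal s) hc (by simp at hle ⊢; linarith)
      refine ⟨s :: p, d, q, rfl, ?_, by simp; linarith⟩
      intro p' hp'
      rcases p' with _ | ⟨e, p''⟩
      · simpa using hpos
      · rw [List.cons_prefix_cons] at hp'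
        obtain ⟨rfl, hp''⟩ := hp'
        have := hpref _ hp''
        simp; linarith

/-- Decomposition of a nonempty decorated Dyck path at its first return. -/
lemma decompose {w : List Step} (hw : IsDecoratedDyck w) (hne : w ≠ []) :
    ∃ p d q, stepVal d = -1 ∧ w = Step.U :: p ++ d :: q ∧ IsDecoratedDyck p ∧
      IsDecoratedDyck q ∧ (p = [] → d = Step.D) ∧ (d = Step.R → q = []) := by
  obtain ⟨s, t, rfl⟩ : ∃ s t, w = s :: t := by
    cases w with
    | nil => exact absurd rfl hne
    | cons s t => exact ⟨s, t, rfl⟩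
  have hsU : s = Step.U := head_eq_U hw.1.1
  subst hsU
  have hwh : (1 : ℤ) + height t = 0 := by
    have h := hw.2; simpa using h
  obtain ⟨p, d, q, rfl, hpref, hsum⟩ := hit_zero t 1 one_pos hwh.le
  have hd : stepVal d = -1 := by
    rcases stepVal_cases d with rfl | hv
    · have h3 := hpref p (List.prefix_refl p)
      rw [stepVal_U] at hsum; linarith
    · exact hv
  have hp0 : height p = 0 := by rw [hd] at hsum; linarith
  have hq0 : height q = 0 := by
    simp [hp0, hd] at hwh; linarith
  have hp : IsDecoratedDyck p := by
    refine ⟨⟨?_, ?_, ?_⟩, hp0⟩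
    · intro r hr; have := hpref r hr; linarith
    · exact fun hinf => hw.1.2.1 (hinf.trans ⟨[Step.U], d :: q, by simp⟩)
    · exact fun hinf => hw.1.2.2 (hinf.trans ⟨[Step.U], d :: q, by simp⟩)
  have hq : IsDecoratedDyck q := by
    refine ⟨⟨?_, ?_, ?_⟩, hq0⟩
    · intro r hr
      obtain ⟨rest, rfl⟩ := hr
      have h4 := hw.1.1 (Step.U :: p ++ d :: r) ⟨rest, by simp⟩
      simp [hp0, hd] at h4
      linarith
    · exact fun hinf => hw.1.2.1 (hinf.trans ⟨Step.U :: p ++ [d], [], by simp⟩)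
    · exact fun hinf => hw.1.2.2 (hinf.trans ⟨Step.U :: p ++ [d], [], by simp⟩)
  have h1 : p = [] → d = Step.D := by
    rintro rfl
    rcases (down_iff d).mp hd with rfl | rfl
    · rfl
    · exact absurd ⟨[], q, by simp⟩ hw.1.2.1
  have h2 : d = Step.R → q = [] := by
    rintro rfl
    cases q with
    | nil => rfl
    | cons y q' =>
      have hy : y = Step.U := dyck_head_U hq _ _ rfl
      subst hy
      exact absurd ⟨Step.U :: p, q', by simp⟩ hw.1.2.2
  exact ⟨p, d, q, hd, rfl, hp, hq, h1, h2⟩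

/-- Injectivity of the gluing decomposition. -/
lemma glue_inj {p p' q q' : List Step} {d d' : Step}
    (hp : ∀ r, r <+: p → 0 ≤ height r) (hp0 : height p = 0)
    (hp' : ∀ r, r <+: p' → 0 ≤ height r) (hp0' : height p' = 0)
    (hd : stepVal d = -1) (hd' : stepVal d' = -1)
    (h : p ++ d :: q = p' ++ d' :: q') : p = p' ∧ d = d' ∧ q = q' := by
  rcases List.append_eq_append_iff.mp h with ⟨b, hb1, hb2⟩ | ⟨c, hc1, hc2⟩
  · rcases b with _ | ⟨z, b'⟩
    · simp at hb1 hb2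
      exact ⟨hb1.symm, hb2.1, hb2.2⟩
    · exfalso
      injection hb2 with hz hq2
      subst hz
      have hpre : (p ++ [d]) <+: p' := by
        rw [hb1]; exact ⟨b', by simp⟩
      have h5 := hp' _ hpre
      simp [hp0, hd] at h5
  · rcases c with _ | ⟨z, c'⟩
    · simp at hc1 hc2
      exact ⟨hc1, hc2.1.symm, hc2.2.symm⟩
    · exfalso
      injection hc2 with hz hq2
      subst hz
      have hpre : (p' ++ [d']) <+: p := by
        rw [hc1]; exact ⟨c', by simp⟩
      have h5 := hp _ hpre
      simp [hp0', hd'] at h5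

lemma not_peak_nil : ¬ HasPeakAtLevelOne [] := by
  rintro ⟨p, q, d, -, h, -⟩
  simp at h

/-- Peaks at level one of a glued path. -/
lemma peak_glue {p q : List Step} {d : Step}
    (hp : ∀ r, r <+: p → 0 ≤ height r) (hp0 : height p = 0) (hd : stepVal d = -1)
    (hU : ∀ x xs, p = x :: xs → x = Step.U) :
    HasPeakAtLevelOne (Step.U :: p ++ d :: q) ↔ (p = [] ∨ HasPeakAtLevelOne q) := by
  constructor
  · rintro ⟨r, s, d', hd', hw, hr⟩
    rcases r with _ | ⟨y, r'⟩
    · simp only [List.nil_append, List.cons_append] at hw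
      injection hw with _ hw2
      rcases p with _ | ⟨x, p'⟩
      · exact Or.inl rfl
      · exfalso
        have hx : x = Step.U := hU _ _ rfl
        subst hx
        rw [List.cons_append] at hw2
        injection hw2 with h1 _
        rcases hd' with rfl | rfl <;> cases h1
    · rw [List.cons_append] at hw
      rw [show (y :: r') ++ Step.U :: d' :: s = y :: (r' ++ Step.U :: d' :: s) from rfl] at hw
      injection hw with hy h2
      subst hy
      have hr' : height r' = -1 := by
        simp at hr; linarith
      rcases List.append_eq_append_iff.mp h2 with ⟨b, hb1, hb2⟩ | ⟨c, hc1, hc2⟩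
      · rcases b with _ | ⟨z, b'⟩
        · simp at hb1; rw [hb1] at hr'; rw [hp0] at hr'; cases hr'
        · injection hb2 with hz hb'
          subst hz
          right
          have hb'h : height b' = 0 := by
            rw [hb1] at hr'; simp [hp0, hd] at hr'; linarith
          exact ⟨b', s, d', hd', hb', hb'h⟩
      · rcases c with _ | ⟨z, c'⟩
        · simp at hc1; rw [hc1] at hp0; rw [hp0] at hr'; cases hr'
        · exfalso
          have hpre : r' <+: p := ⟨z :: c', hc1.symm⟩
          have := hp _ hpre
          linarith
  · rintro (rfl | ⟨r, s, d', hd', rfl, hr⟩)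
    · exact ⟨[], q, d, (down_iff d).mp hd, by simp, rfl⟩
    · refine ⟨Step.U :: p ++ d :: r, s, d', hd', by simp, ?_⟩
      simp [hp0, hd, hr]

lemma height_add_length (w : List Step) :
    height w + (w.length : ℤ) = 2 * (w.count Step.U : ℤ) := by
  induction w with
  | nil => simp
  | cons s t ih =>
    rw [height_cons, List.count_cons, List.length_cons]
    cases s <;> simp <;> omega

lemma dyck_even {w : List Step} (h : IsDecoratedDyck w) : ∃ k, w.length = 2 * k := by
  have h2 : (w.length : ℤ) = 2 * (w.count Step.U : ℤ) := by
    have h3 := height_add_length w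
    rw [h.2] at h3
    linarith
  exact ⟨w.count Step.U, by exact_mod_cast h2⟩

/-! ### Finiteness -/

instance : Fintype Step where
  elems := {Step.U, Step.D, Step.R}
  complete := fun x => by cases x <;> simp

instance instFiniteLen (n : ℕ) : Finite {w : List Step // w.length = n} :=
  Finite.of_equiv (List.Vector Step n) (Equiv.cast rfl)

instance instFiniteLenP (n : ℕ) (P : List Step → Prop) :
    Finite {w : List Step // w.length = n ∧ P w} := by
  apply Finite.of_injective (fun w => (⟨w.1, w.2.1⟩ : {w : List Step // w.length = n}))
  intro x y h
  have h2 := congrArg Subtype.val h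
  exact Subtype.ext h2

lemma nat_card_sigma {m : ℕ} (F : Fin m → Type*) [∀ i, Finite (F i)] :
    Nat.card (Σ i, F i) = ∑ i, Nat.card (F i) := by
  classical
  have : ∀ i, Fintype (F i) := fun i => Fintype.ofFinite _
  simp [Nat.card_eq_fintype_card]

/-! ### The counting sequences -/

/-- All decorated Dyck paths of length `2n`. -/
noncomputable def bfun (n : ℕ) : ℕ :=
  Nat.card {w : List Step // w.length = 2 * n ∧ IsDecoratedDyck w}

/-- Nonempty decorated Dyck paths of length `2n`. -/
noncomputable def bpfun (n : ℕ) : ℕ :=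
  Nat.card {w : List Step // w.length = 2 * n ∧ IsDecoratedDyck w ∧ w ≠ []}

lemma bfun_zero : bfun 0 = 1 := by
  rw [bfun, Nat.card_eq_one_iff_unique]
  constructor
  · constructor
    rintro ⟨w, hw, -⟩ ⟨w', hw', -⟩
    simp only [Subtype.mk.injEq]
    rw [List.length_eq_zero_iff.mp (by omega : w.length = 0),
      List.length_eq_zero_iff.mp (by omega : w'.length = 0)]
  · exact ⟨⟨[], by simp, dyck_nil⟩⟩

lemma a_zero : a 0 = 1 := by
  rw [a, Nat.card_eq_one_iff_unique]
  constructor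
  · constructor
    rintro ⟨w, hw, -⟩ ⟨w', hw', -⟩
    simp only [Subtype.mk.injEq]
    rw [List.length_eq_zero_iff.mp (by omega : w.length = 0),
      List.length_eq_zero_iff.mp (by omega : w'.length = 0)]
  · exact ⟨⟨[], by simp, dyck_nil, not_peak_nil⟩⟩

lemma bpfun_zero : bpfun 0 = 0 := by
  rw [bpfun]
  have : IsEmpty {w : List Step // w.length = 2 * 0 ∧ IsDecoratedDyck w ∧ w ≠ []} :=
    ⟨fun w => w.2.2.2 (List.length_eq_zero_iff.mp (by have := w.2.1; omega))⟩
  exact Nat.card_of_isEmpty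

lemma bpfun_eq {n : ℕ} (hn : n ≠ 0) : bpfun n = bfun n := by
  rw [bpfun, bfun]
  apply Nat.card_congr
  apply Equiv.subtypeEquivRight
  intro w
  constructor
  · rintro ⟨h1, h2, h3⟩; exact ⟨h1, h2⟩
  · rintro ⟨h1, h2⟩
    refine ⟨h1, h2, fun he => ?_⟩
    rw [he] at h1; simp at h1; omega

lemma bpfun_cast (n : ℕ) :
    (bpfun n : ℤ) = (bfun n : ℤ) - (if n = 0 then 1 else 0) := by
  rcases eq_or_ne n 0 with rfl | hn
  · simp [bpfun_zero, bfun_zero]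
  · simp [bpfun_eq hn, hn]

/-! ### The bijections -/

abbrev DW (n : ℕ) := {w : List Step // w.length = n ∧ IsDecoratedDyck w}
abbrev DWp (n : ℕ) := {w : List Step // w.length = n ∧ IsDecoratedDyck w ∧ w ≠ []}
abbrev AW (n : ℕ) := {w : List Step // w.length = n ∧ IsDecoratedDyck w ∧ ¬ HasPeakAtLevelOne w}

def PhiB (n : ℕ) :
    ((Σ i : Fin (n+1), DW (2*(i:ℕ)) × DW (2*(n - (i:ℕ)))) ⊕ DWp (2*n)) → DW (2*(n+1))
  | Sum.inl ⟨i, p, q⟩ =>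
    ⟨Step.U :: p.1 ++ Step.D :: q.1, by
      have h1 := p.2.1; have h2 := q.2.1; have h3 := i.2
      simp; omega,
     glue_isDyck p.2.2 q.2.2 stepVal_D (fun _ => rfl) (fun h => by cases h)⟩
  | Sum.inr p =>
    ⟨Step.U :: p.1 ++ [Step.R], by
      have h1 := p.2.1; simp; omega,
     glue_isDyck p.2.2.1 dyck_nil stepVal_R (fun h => absurd h p.2.2.2) (fun _ => rfl)⟩

lemma PhiB_inj (n : ℕ) : Function.Injective (PhiB n) := by
  intro x y h
  have hl := congrArg Subtype.val h
  rcases x with ⟨i, p, q⟩ | p <;> rcases y with ⟨j, p', q'⟩ | p'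
  · have hl' : Step.U :: (p.1 ++ Step.D :: q.1) = Step.U :: (p'.1 ++ Step.D :: q'.1) := hl
    injection hl' with _ hl2
    obtain ⟨hpp, -, hqq⟩ :=
      glue_inj p.2.2.1.1 p.2.2.2 p'.2.2.1.1 p'.2.2.2 stepVal_D stepVal_D hl2
    have hij : i = j := by
      apply Fin.ext
      have e1 := p.2.1; have e2 := p'.2.1
      rw [hpp] at e1; omega
    subst hij
    have hP : p = p' := Subtype.ext hpp
    have hQ : q = q' := Subtype.ext hqq
    subst hP; subst hQ; rfl
  · exfalso
    have hl' : Step.U :: (p.1 ++ Step.D :: q.1) = Step.U :: (p'.1 ++ Step.R :: []) := hl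
    injection hl' with _ hl2
    obtain ⟨-, hdd, -⟩ :=
      glue_inj p.2.2.1.1 p.2.2.2 p'.2.2.1.1.1 p'.2.2.1.2 stepVal_D stepVal_R hl2
    cases hdd
  · exfalso
    have hl' : Step.U :: (p.1 ++ Step.R :: []) = Step.U :: (p'.1 ++ Step.D :: q'.1) := hl
    injection hl' with _ hl2
    obtain ⟨-, hdd, -⟩ :=
      glue_inj p.2.2.1.1.1 p.2.2.1.2 p'.2.2.1.1 p'.2.2.2 stepVal_R stepVal_D hl2
    cases hdd
  · have hl' : Step.U :: (p.1 ++ Step.R :: []) = Step.U :: (p'.1 ++ Step.R :: []) := hl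
    injection hl' with _ hl2
    obtain ⟨hpp, -, -⟩ :=
      glue_inj p.2.2.1.1.1 p.2.2.1.2 p'.2.2.1.1.1 p'.2.2.1.2 stepVal_R stepVal_R hl2
    exact congrArg Sum.inr (Subtype.ext hpp)

lemma PhiB_surj (n : ℕ) : Function.Surjective (PhiB n) := by
  rintro ⟨w, hlen, hdy⟩
  have hne : w ≠ [] := by intro h; rw [h] at hlen; simp at hlen
  obtain ⟨p, d, q, hd, rfl, hp, hq, h1, h2⟩ := decompose hdy hne
  have hlen' : p.length + q.length + 2 = 2*(n+1) := by simp at hlen; omega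
  rcases (down_iff d).mp hd with rfl | rfl
  · obtain ⟨k, hk⟩ := dyck_even hp
    obtain ⟨m, hm⟩ := dyck_even hq
    refine ⟨Sum.inl ⟨⟨k, by omega⟩, ⟨p, hk, hp⟩, ⟨q, by simp; omega, hq⟩⟩, Subtype.ext rfl⟩
  · have hqe : q = [] := h2 rfl
    subst hqe
    have hpne : p ≠ [] := fun h => by cases (h1 h)
    have hlp : p.length = 2*n := by simp at hlen'; omega
    exact ⟨Sum.inr ⟨p, hlp, hp, hpne⟩, Subtype.ext rfl⟩

lemma bfun_succ (n : ℕ) :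
    bfun (n+1) = (∑ i ∈ Finset.range (n+1), bfun i * bfun (n - i)) + bpfun n := by
  have hcard := Nat.card_eq_of_bijective _ ⟨PhiB_inj n, PhiB_surj n⟩
  rw [bfun] at *
  rw [← hcard, Nat.card_sum, nat_card_sigma]
  congr 1
  rw [← Fin.sum_univ_eq_sum_range (fun i => bfun i * bfun (n - i)) (n+1)]
  apply Finset.sum_congr rfl
  intro i _
  rw [Nat.card_prod]
  rfl

def PhiA (n : ℕ) :
    ((Σ i : Fin (n+1), DWp (2*(i:ℕ)) × AW (2*(n - (i:ℕ)))) ⊕ DWp (2*n)) → AW (2*(n+1))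
  | Sum.inl ⟨i, p, q⟩ =>
    ⟨Step.U :: p.1 ++ Step.D :: q.1, by
      have h1 := p.2.1; have h2 := q.2.1; have h3 := i.2
      simp; omega,
     glue_isDyck p.2.2.1 q.2.2.1 stepVal_D (fun h => absurd h p.2.2.2) (fun h => by cases h),
     by
      rw [peak_glue p.2.2.1.1.1 p.2.2.1.2 stepVal_D (dyck_head_U p.2.2.1)]
      rintro (h | h)
      · exact p.2.2.2 h
      · exact q.2.2.2 h⟩
  | Sum.inr p =>
    ⟨Step.U :: p.1 ++ [Step.R], by
      have h1 := p.2.1; simp; omega,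
     glue_isDyck p.2.2.1 dyck_nil stepVal_R (fun h => absurd h p.2.2.2) (fun _ => rfl),
     by
      rw [peak_glue p.2.2.1.1.1 p.2.2.1.2 stepVal_R (dyck_head_U p.2.2.1)]
      rintro (h | h)
      · exact p.2.2.2 h
      · exact not_peak_nil h⟩

lemma PhiA_inj (n : ℕ) : Function.Injective (PhiA n) := by
  intro x y h
  have hl := congrArg Subtype.val h
  rcases x with ⟨i, p, q⟩ | p <;> rcases y with ⟨j, p', q'⟩ | p'
  · have hl' : Step.U :: (p.1 ++ Step.D :: q.1) = Step.U :: (p'.1 ++ Step.D :: q'.1) := hl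
    injection hl' with _ hl2
    obtain ⟨hpp, -, hqq⟩ :=
      glue_inj p.2.2.1.1.1 p.2.2.1.2 p'.2.2.1.1.1 p'.2.2.1.2 stepVal_D stepVal_D hl2
    have hij : i = j := by
      apply Fin.ext
      have e1 := p.2.1; have e2 := p'.2.1
      rw [hpp] at e1; omega
    subst hij
    have hP : p = p' := Subtype.ext hpp
    have hQ : q = q' := Subtype.ext hqq
    subst hP; subst hQ; rfl
  · exfalso
    have hl' : Step.U :: (p.1 ++ Step.D :: q.1) = Step.U :: (p'.1 ++ Step.R :: []) := hl
    injection hl' with _ hl2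
    obtain ⟨-, hdd, -⟩ :=
      glue_inj p.2.2.1.1.1 p.2.2.1.2 p'.2.2.1.1.1 p'.2.2.1.2 stepVal_D stepVal_R hl2
    cases hdd
  · exfalso
    have hl' : Step.U :: (p.1 ++ Step.R :: []) = Step.U :: (p'.1 ++ Step.D :: q'.1) := hl
    injection hl' with _ hl2
    obtain ⟨-, hdd, -⟩ :=
      glue_inj p.2.2.1.1.1 p.2.2.1.2 p'.2.2.1.1.1 p'.2.2.1.2 stepVal_R stepVal_D hl2
    cases hdd
  · have hl' : Step.U :: (p.1 ++ Step.R :: []) = Step.U :: (p'.1 ++ Step.R :: []) := hl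
    injection hl' with _ hl2
    obtain ⟨hpp, -, -⟩ :=
      glue_inj p.2.2.1.1.1 p.2.2.1.2 p'.2.2.1.1.1 p'.2.2.1.2 stepVal_R stepVal_R hl2
    exact congrArg Sum.inr (Subtype.ext hpp)

lemma PhiA_surj (n : ℕ) : Function.Surjective (PhiA n) := by
  rintro ⟨w, hlen, hdy, hnp⟩
  have hne : w ≠ [] := by intro h; rw [h] at hlen; simp at hlen
  obtain ⟨p, d, q, hd, rfl, hp, hq, h1, h2⟩ := decompose hdy hne
  rw [peak_glue hp.1.1 hp.2 hd (dyck_head_U hp)] at hnp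
  obtain ⟨hpne, hqnp⟩ := not_or.mp hnp
  have hlen' : p.length + q.length + 2 = 2*(n+1) := by simp at hlen; omega
  rcases (down_iff d).mp hd with rfl | rfl
  · obtain ⟨k, hk⟩ := dyck_even hp
    obtain ⟨m, hm⟩ := dyck_even hq
    refine ⟨Sum.inl ⟨⟨k, by omega⟩, ⟨p, hk, hp, hpne⟩, ⟨q, by simp; omega, hq, hqnp⟩⟩,
      Subtype.ext rfl⟩
  · have hqe : q = [] := h2 rfl
    subst hqe
    have hlp : p.length = 2*n := by simp at hlen'; omega
    exact ⟨Sum.inr ⟨p, hlp, hp, hpne⟩, Subtype.ext rfl⟩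

lemma a_succ (n : ℕ) :
    a (n+1) = (∑ i ∈ Finset.range (n+1), bpfun i * a (n - i)) + bpfun n := by
  have hcard := Nat.card_eq_of_bijective _ ⟨PhiA_inj n, PhiA_surj n⟩
  rw [a] at *
  rw [← hcard, Nat.card_sum, nat_card_sigma]
  congr 1
  rw [← Fin.sum_univ_eq_sum_range (fun i => bpfun i * a (n - i)) (n+1)]
  apply Finset.sum_congr rfl
  intro i _
  rw [Nat.card_prod]
  rfl

/-! ### Power series -/

noncomputable def Bser : PowerSeries ℤ := PowerSeries.mk fun n => (bfun n : ℤ)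
noncomputable def Yser : PowerSeries ℤ := PowerSeries.mk fun n => (a n : ℤ)

lemma conv_cast (f g : ℕ → ℕ) (n : ℕ) :
    PowerSeries.coeff n
        (PowerSeries.mk (fun k => (f k : ℤ)) * PowerSeries.mk (fun k => (g k : ℤ)))
      = ∑ i ∈ Finset.range (n+1), (f i : ℤ) * (g (n - i) : ℤ) := by
  rw [PowerSeries.coeff_mul, Finset.Nat.sum_antidiagonal_eq_sum_range_succ_mk]
  simp

lemma hB : (PowerSeries.X : PowerSeries ℤ) * Bser^2 + PowerSeries.X * Bser
    - Bser - PowerSeries.X + 1 = 0 := by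
  ext n
  rw [map_zero]
  rcases n with _ | n
  · simp [Bser, bfun_zero, PowerSeries.coeff_zero_eq_constantCoeff, map_add, map_sub,
      map_mul, map_pow]
  · simp only [map_add, map_sub, pow_two]
    rw [PowerSeries.coeff_succ_X_mul, PowerSeries.coeff_succ_X_mul, PowerSeries.coeff_X,
      PowerSeries.coeff_one, Bser, conv_cast]
    simp only [PowerSeries.coeff_mk]
    have hr := bfun_succ n
    zify at hr
    rw [hr, bpfun_cast n]
    rcases eq_or_ne n 0 with rfl | hn
    · norm_num
    · simp [hn, Nat.succ_ne_zero]

lemma hY : Yser = 1 + PowerSeries.X * Bser * Yser + PowerSeries.X * Bser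
    - PowerSeries.X * Yser - PowerSeries.X := by
  ext n
  rcases n with _ | n
  · simp [Yser, Bser, a_zero, PowerSeries.coeff_zero_eq_constantCoeff, map_add, map_sub,
      map_mul]
  · simp only [map_add, map_sub, mul_assoc]
    rw [PowerSeries.coeff_succ_X_mul, PowerSeries.coeff_succ_X_mul,
      PowerSeries.coeff_succ_X_mul, PowerSeries.coeff_X, PowerSeries.coeff_one,
      Yser, Bser, conv_cast]
    simp only [PowerSeries.coeff_mk]
    have hr := a_succ n
    zify at hr
    have h1 : ∑ i ∈ Finset.range (n+1), (bpfun i : ℤ) * (a (n-i) : ℤ)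
        = (∑ i ∈ Finset.range (n+1), (bfun i : ℤ) * (a (n-i) : ℤ)) - a n := by
      rw [Finset.sum_congr rfl (fun i _ => by rw [bpfun_cast i, sub_mul])]
      rw [Finset.sum_sub_distrib]
      congr 1
      rw [Finset.sum_eq_single_of_mem 0 (Finset.mem_range.mpr (Nat.succ_pos n))
        (fun i _ hne => by simp [hne])]
      simp
    rw [hr, h1, bpfun_cast n]
    rcases eq_or_ne n 0 with rfl | hn
    · norm_num
      ring
    · simp [hn, Nat.succ_ne_zero]
      ring

theorem A128723_algebraic_equation :
    (PowerSeries.X : PowerSeries ℤ) * (3 + PowerSeries.X) *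
        (PowerSeries.mk fun n => (a n : ℤ)) ^ 2
      - 2 * (1 - PowerSeries.X ^ 2) * (PowerSeries.mk fun n => (a n : ℤ))
      + (PowerSeries.X - 1) * (PowerSeries.X - 2) = 0 := by
  rw [show (PowerSeries.mk fun n => ((a n : ℤ))) = Yser from rfl]
  have hb := hB
  have hy := hY
  linear_combination (PowerSeries.X * (Yser + 1)^2) * hb
    + ((Yser - 1) + (3 * PowerSeries.X - 1) * (Yser + 1)
      + PowerSeries.X * (Bser - 1) * (Yser + 1)) * hy
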